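/- Fix n ≥ 1, r > 0, and nonnegative integers α₁,…,α_n. Let Q(x) = |x₁|^{α₁} |x₂|^{α₂} ⋯ |x_n|^{α_n} and set β_i = (α_i + 1)/2 for each i. Then the Lebesgue integral of Q over the closed Euclidean ball B_n(0;r) = {x ∈ ℝⁿ : ‖x‖ ≤ r} equals (2 r^{α₁+⋯+α_n+n} / (α₁+⋯+α_n+n)) · (Γ(β₁)Γ(β₂)⋯Γ(β_n)) / Γ(β₁+β₂+⋯+β_n), where Γ is the Gamma function. -/

import Mathlib

open MeasureTheory Measure Set Metric Real
open scoped ENNReal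

lemma integrableOn_pow_mul_exp_neg_sq_Ioi (a : ℕ) :
    IntegrableOn (fun u : ℝ => u ^ a * Real.exp (-u ^ 2)) (Ioi 0) := by
  have h := integrableOn_rpow_mul_exp_neg_rpow (p := 2) (s := (a : ℝ)) (lt_of_lt_of_le neg_one_lt_zero (Nat.cast_nonneg a)) (by norm_num)
  refine h.congr_fun (fun x hx => ?_) measurableSet_Ioi
  dsimp only
  rw [show ((2:ℝ)) = ((2:ℕ):ℝ) by norm_num, Real.rpow_natCast, Real.rpow_natCast]

lemma integral_pow_mul_exp_neg_sq_Ioi (a : ℕ) :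
    ∫ u in Ioi (0:ℝ), u ^ a * Real.exp (-u ^ 2) = (1 / 2) * Real.Gamma (((a:ℝ) + 1) / 2) := by
  have h := integral_rpow_mul_exp_neg_rpow (p := 2) (q := (a : ℝ)) (by norm_num) (lt_of_lt_of_le neg_one_lt_zero (Nat.cast_nonneg a))
  rw [← h]
  refine setIntegral_congr_fun measurableSet_Ioi (fun x hx => ?_)
  rw [show ((2:ℝ)) = ((2:ℕ):ℝ) by norm_num, Real.rpow_natCast, Real.rpow_natCast]

lemma integrable_abs_pow_mul_exp_neg_sq (a : ℕ) :
    Integrable (fun u : ℝ => |u| ^ a * Real.exp (-u ^ 2)) := by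
  have heq : (fun u : ℝ => |u| ^ a * Real.exp (-u ^ 2))
      = fun u : ℝ => |u| ^ a * Real.exp (-|u| ^ 2) := by
    funext u; rw [sq_abs]
  rw [heq]
  have hIoi : IntegrableOn (fun u : ℝ => |u| ^ a * Real.exp (-|u| ^ 2)) (Ioi 0) := by
    refine (integrableOn_pow_mul_exp_neg_sq_Ioi a).congr_fun (fun x hx => ?_) measurableSet_Ioi
    rw [abs_of_pos hx]
  have hIic : IntegrableOn (fun u : ℝ => |u| ^ a * Real.exp (-|u| ^ 2)) (Iic 0) := by
    rw [← Measure.map_neg_eq_self (volume : Measure ℝ)]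
    have m : MeasurableEmbedding fun x : ℝ => -x := (Homeomorph.neg ℝ).measurableEmbedding
    rw [m.integrableOn_map_iff]
    simp_rw [Function.comp_def, abs_neg, neg_preimage, neg_Iic, neg_zero]
    exact Iff.mpr integrableOn_Ici_iff_integrableOn_Ioi hIoi
  have := hIic.union hIoi
  rwa [Iic_union_Ioi, integrableOn_univ] at this

lemma integral_abs_pow_mul_exp_neg_sq (a : ℕ) :
    ∫ u : ℝ, |u| ^ a * Real.exp (-u ^ 2) = Real.Gamma (((a:ℝ) + 1) / 2) := by
  have heq : (fun u : ℝ => |u| ^ a * Real.exp (-u ^ 2))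
      = fun u : ℝ => (fun t : ℝ => t ^ a * Real.exp (-t ^ 2)) |u| := by
    funext u; simp only [sq_abs]
  rw [heq, integral_comp_abs (f := fun t : ℝ => t ^ a * Real.exp (-t ^ 2)), integral_pow_mul_exp_neg_sq_Ioi]
  ring


lemma lintegral_sphere_decomp (n : ℕ) (hn : 1 ≤ n)
    (f : EuclideanSpace ℝ (Fin n) → ℝ≥0∞) (hf : Measurable f) :
    ∫⁻ x, f x = ∫⁻ y : sphere (0 : EuclideanSpace ℝ (Fin n)) 1,
        (∫⁻ r in Ioi (0:ℝ), ENNReal.ofReal (r ^ (n - 1)) * f (r • (y : EuclideanSpace ℝ (Fin n))))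
          ∂(volume : Measure (EuclideanSpace ℝ (Fin n))).toSphere := by
  haveI : Nonempty (Fin n) := ⟨⟨0, hn⟩⟩
  haveI : Nontrivial (EuclideanSpace ℝ (Fin n)) := inferInstance
  have mp := Measure.measurePreserving_homeomorphUnitSphereProd (volume : Measure (EuclideanSpace ℝ (Fin n)))
  have hcont : Continuous fun p : sphere (0:EuclideanSpace ℝ (Fin n)) 1 × Ioi (0:ℝ) => ((p.2 : ℝ) • (p.1 : EuclideanSpace ℝ (Fin n))) := by
    fun_prop
  have hsm : Measurable fun p : sphere (0:EuclideanSpace ℝ (Fin n)) 1 × Ioi (0:ℝ) => f ((p.2 : ℝ) • (p.1 : EuclideanSpace ℝ (Fin n))) :=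
    hf.comp hcont.measurable
  calc ∫⁻ x, f x ∂(volume : Measure (EuclideanSpace ℝ (Fin n))) = ∫⁻ x in {(0:EuclideanSpace ℝ (Fin n))}ᶜ, f x := by
        rw [restrict_compl_singleton]
    _ = ∫⁻ x : ({(0:EuclideanSpace ℝ (Fin n))}ᶜ : Set (EuclideanSpace ℝ (Fin n))), f x ∂(comap Subtype.val volume) :=
        (lintegral_subtype_comap (measurableSet_singleton _).compl f).symm
    _ = ∫⁻ p : sphere (0:EuclideanSpace ℝ (Fin n)) 1 × Ioi (0:ℝ), f ((p.2 : ℝ) • (p.1 : EuclideanSpace ℝ (Fin n)))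
          ∂((volume : Measure (EuclideanSpace ℝ (Fin n))).toSphere.prod (volumeIoiPow (Module.finrank ℝ (EuclideanSpace ℝ (Fin n)) - 1))) := by
        rw [← mp.lintegral_comp_emb (Homeomorph.measurableEmbedding _)
          (fun p : sphere (0:EuclideanSpace ℝ (Fin n)) 1 × Ioi (0:ℝ) => f ((p.2 : ℝ) • (p.1 : EuclideanSpace ℝ (Fin n))))]
        refine lintegral_congr fun x => ?_
        have hx : (x : EuclideanSpace ℝ (Fin n)) ≠ 0 := x.2
        simp [homeomorphUnitSphereProd, smul_inv_smul₀ (norm_ne_zero_iff.2 hx)]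
    _ = ∫⁻ y : sphere (0:EuclideanSpace ℝ (Fin n)) 1, ∫⁻ r : Ioi (0:ℝ), f ((r : ℝ) • (y : EuclideanSpace ℝ (Fin n)))
          ∂(volumeIoiPow (n - 1)) ∂(volume : Measure (EuclideanSpace ℝ (Fin n))).toSphere := by
        rw [show Module.finrank ℝ (EuclideanSpace ℝ (Fin n)) - 1 = n - 1 by rw [finrank_euclideanSpace_fin]]
        exact lintegral_prod _ hsm.aemeasurable
    _ = _ := by
        refine lintegral_congr fun y => ?_
        rw [Measure.volumeIoiPow]
        rw [lintegral_withDensity_eq_lintegral_mul (comap Subtype.val volume)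
          (f := fun r : Ioi (0:ℝ) => ENNReal.ofReal ((r:ℝ) ^ (n-1)))
          (by exact (measurable_subtype_coe.pow_const _).ennreal_ofReal)
          (g := fun r : Ioi (0:ℝ) => f ((r:ℝ) • (y:EuclideanSpace ℝ (Fin n))))
          (hf.comp (continuous_subtype_val.smul continuous_const).measurable)]
        exact lintegral_subtype_comap measurableSet_Ioi
          (fun t : ℝ => ENNReal.ofReal (t ^ (n-1)) * f (t • (y:EuclideanSpace ℝ (Fin n))))

lemma lintegral_monomial_mul_norm (n : ℕ) (hn : 1 ≤ n) (α : Fin n → ℕ)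
    (g : ℝ → ℝ≥0∞) (hg : Measurable g) :
    ∫⁻ x : EuclideanSpace ℝ (Fin n), ENNReal.ofReal (∏ i, |x i| ^ α i) * g ‖x‖
      = (∫⁻ y : sphere (0 : EuclideanSpace ℝ (Fin n)) 1,
          ENNReal.ofReal (∏ i, |(y : EuclideanSpace ℝ (Fin n)) i| ^ α i)
            ∂(volume : Measure (EuclideanSpace ℝ (Fin n))).toSphere)
        * ∫⁻ r in Ioi (0:ℝ), ENNReal.ofReal (r ^ (n - 1 + ∑ i, α i)) * g r := by
  have hQc : Continuous fun x : EuclideanSpace ℝ (Fin n) => ∏ i, |x i| ^ α i := by fun_prop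
  have hfm : Measurable fun x : EuclideanSpace ℝ (Fin n) =>
      ENNReal.ofReal (∏ i, |x i| ^ α i) * g ‖x‖ :=
    (hQc.measurable.ennreal_ofReal).mul (hg.comp measurable_norm)
  rw [lintegral_sphere_decomp n hn _ hfm]
  have key : ∀ y : sphere (0 : EuclideanSpace ℝ (Fin n)) 1,
      (∫⁻ r in Ioi (0:ℝ), ENNReal.ofReal (r ^ (n-1)) *
        (ENNReal.ofReal (∏ i, |(r • (y : EuclideanSpace ℝ (Fin n))) i| ^ α i)
          * g ‖r • (y : EuclideanSpace ℝ (Fin n))‖))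
      = ENNReal.ofReal (∏ i, |(y : EuclideanSpace ℝ (Fin n)) i| ^ α i)
          * ∫⁻ r in Ioi (0:ℝ), ENNReal.ofReal (r ^ (n - 1 + ∑ i, α i)) * g r := by
    intro y
    rw [← lintegral_const_mul' _ _ ENNReal.ofReal_ne_top]
    refine setLIntegral_congr_fun measurableSet_Ioi (fun r hr => ?_)
    have hr0 : (0:ℝ) < r := hr
    have hnorm : ‖r • (y : EuclideanSpace ℝ (Fin n))‖ = r := by
      rw [norm_smul, mem_sphere_zero_iff_norm.mp y.2, mul_one, Real.norm_eq_abs,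
        abs_of_pos hr0]
    have happ : ∀ i, (r • (y : EuclideanSpace ℝ (Fin n))) i
        = r * (y : EuclideanSpace ℝ (Fin n)) i := fun i => rfl
    have hprod : (∏ i, |(r • (y : EuclideanSpace ℝ (Fin n))) i| ^ α i)
        = r ^ (∑ i, α i) * ∏ i, |(y : EuclideanSpace ℝ (Fin n)) i| ^ α i := by
      rw [← Finset.prod_pow_eq_pow_sum, ← Finset.prod_mul_distrib]
      refine Finset.prod_congr rfl fun i _ => ?_
      rw [happ i, abs_mul, abs_of_pos hr0, mul_pow]
    rw [hnorm, hprod, ENNReal.ofReal_mul (by positivity)]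
    rw [show (n - 1 + ∑ i, α i) = (n-1) + ∑ i, α i from rfl, pow_add,
      ENNReal.ofReal_mul (by positivity)]
    ring
  calc (∫⁻ y : sphere (0 : EuclideanSpace ℝ (Fin n)) 1,
        (∫⁻ r in Ioi (0:ℝ), ENNReal.ofReal (r ^ (n-1)) *
          (ENNReal.ofReal (∏ i, |(r • (y : EuclideanSpace ℝ (Fin n))) i| ^ α i)
            * g ‖r • (y : EuclideanSpace ℝ (Fin n))‖))
          ∂(volume : Measure (EuclideanSpace ℝ (Fin n))).toSphere)
      = ∫⁻ y : sphere (0 : EuclideanSpace ℝ (Fin n)) 1,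
          (ENNReal.ofReal (∏ i, |(y : EuclideanSpace ℝ (Fin n)) i| ^ α i)
            * ∫⁻ r in Ioi (0:ℝ), ENNReal.ofReal (r ^ (n - 1 + ∑ i, α i)) * g r)
          ∂(volume : Measure (EuclideanSpace ℝ (Fin n))).toSphere := lintegral_congr key
    _ = _ := lintegral_mul_const _
          ((hQc.measurable.comp measurable_subtype_coe).ennreal_ofReal)

lemma lintegral_monomial_ball (n : ℕ) (hn : 1 ≤ n) (α : Fin n → ℕ) (R : ℝ) (hR : 0 < R) :
    ∫⁻ x in closedBall (0 : EuclideanSpace ℝ (Fin n)) R, ENNReal.ofReal (∏ i, |x i| ^ α i)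
      = (∫⁻ y : sphere (0 : EuclideanSpace ℝ (Fin n)) 1,
          ENNReal.ofReal (∏ i, |(y : EuclideanSpace ℝ (Fin n)) i| ^ α i)
            ∂(volume : Measure (EuclideanSpace ℝ (Fin n))).toSphere)
        * ENNReal.ofReal (R ^ (n - 1 + (∑ i, α i) + 1) / ((n - 1 + (∑ i, α i) : ℕ) + 1)) := by
  have hQc : Continuous fun x : EuclideanSpace ℝ (Fin n) => ∏ i, |x i| ^ α i := by fun_prop
  set k := n - 1 + (∑ i, α i) with hk
  have hg : Measurable fun r : ℝ => (Iic R).indicator (fun _ => (1:ℝ≥0∞)) r :=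
    measurable_const.indicator measurableSet_Iic
  have h1 : ∫⁻ x in closedBall (0 : EuclideanSpace ℝ (Fin n)) R,
        ENNReal.ofReal (∏ i, |x i| ^ α i)
      = ∫⁻ x : EuclideanSpace ℝ (Fin n), ENNReal.ofReal (∏ i, |x i| ^ α i)
          * (Iic R).indicator (fun _ => (1:ℝ≥0∞)) ‖x‖ := by
    rw [← lintegral_indicator (measurableSet_closedBall)]
    refine lintegral_congr fun x => ?_
    by_cases hx : ‖x‖ ≤ R
    · rw [Set.indicator_of_mem (mem_closedBall_zero_iff.mpr hx),
        Set.indicator_of_mem (mem_Iic.mpr hx), mul_one]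
    · rw [Set.indicator_of_notMem (fun h => hx (mem_closedBall_zero_iff.mp h)),
        Set.indicator_of_notMem (fun h => hx (mem_Iic.mp h)), mul_zero]
  rw [h1, lintegral_monomial_mul_norm n hn α _ hg]
  congr 1
  have h2 : ∫⁻ r in Ioi (0:ℝ), ENNReal.ofReal (r ^ k) *
        (Iic R).indicator (fun _ => (1:ℝ≥0∞)) r
      = ∫⁻ r in Ioc (0:ℝ) R, ENNReal.ofReal (r ^ k) := by
    have : ∀ r : ℝ, ENNReal.ofReal (r ^ k) * (Iic R).indicator (fun _ => (1:ℝ≥0∞)) r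
        = (Iic R).indicator (fun t => ENNReal.ofReal (t ^ k)) r := by
      intro r
      by_cases hr : r ∈ Iic R
      · rw [Set.indicator_of_mem hr, Set.indicator_of_mem hr, mul_one]
      · rw [Set.indicator_of_notMem hr, Set.indicator_of_notMem hr, mul_zero]
    simp_rw [this]
    rw [lintegral_indicator measurableSet_Iic, Measure.restrict_restrict measurableSet_Iic,
      Set.Iic_inter_Ioi]
  rw [h2, ← MeasureTheory.ofReal_integral_eq_lintegral_ofReal]
  · congr 1
    rw [← intervalIntegral.integral_of_le hR.le, integral_pow]
    simp
  · exact (continuous_pow k).integrableOn_Ioc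
  · filter_upwards [ae_restrict_mem measurableSet_Ioc] with r hr
    exact pow_nonneg hr.1.le k

lemma lintegral_monomial_gaussian (n : ℕ) (hn : 1 ≤ n) (α : Fin n → ℕ) :
    ENNReal.ofReal (∏ i, Real.Gamma (((α i : ℝ) + 1) / 2))
      = (∫⁻ y : sphere (0 : EuclideanSpace ℝ (Fin n)) 1,
          ENNReal.ofReal (∏ i, |(y : EuclideanSpace ℝ (Fin n)) i| ^ α i)
            ∂(volume : Measure (EuclideanSpace ℝ (Fin n))).toSphere)
        * ENNReal.ofReal ((1/2) * Real.Gamma ((((n - 1 + (∑ i, α i) : ℕ) : ℝ) + 1) / 2)) := by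
  set k := n - 1 + (∑ i, α i) with hk
  have hg : Measurable fun r : ℝ => ENNReal.ofReal (Real.exp (-r ^ 2)) := by fun_prop
  -- the function on E and its pointwise product form
  have hfun : ∀ x : EuclideanSpace ℝ (Fin n),
      ENNReal.ofReal (∏ i, |x i| ^ α i) * ENNReal.ofReal (Real.exp (-‖x‖ ^ 2))
        = ENNReal.ofReal (∏ i, |x i| ^ α i * Real.exp (-(x i) ^ 2)) := by
    intro x
    have hns : ‖x‖ ^ 2 = ∑ i, (x i) ^ 2 := by
      rw [EuclideanSpace.norm_eq, Real.sq_sqrt (by positivity)]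
      refine Finset.sum_congr rfl fun i _ => by rw [Real.norm_eq_abs, sq_abs]
    rw [← ENNReal.ofReal_mul (by positivity), Finset.prod_mul_distrib]
    congr 1
    rw [hns, ← Finset.sum_neg_distrib, Real.exp_sum]
  -- transfer to the product measure
  have mp := (EuclideanSpace.volume_preserving_symm_measurableEquiv_toLp (Fin n)).symm
  have hpi : Integrable (fun y : Fin n → ℝ => ∏ i, |y i| ^ α i * Real.exp (-(y i) ^ 2)) :=
    Integrable.fintype_prod (fun i => integrable_abs_pow_mul_exp_neg_sq (α i))
  have hint : Integrable (fun x : EuclideanSpace ℝ (Fin n) =>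
      ∏ i, |x i| ^ α i * Real.exp (-(x i) ^ 2)) := by
    refine (mp.integrable_comp_emb (MeasurableEquiv.measurableEmbedding _)).mp ?_
    exact hpi
  have hval : ∫ x : EuclideanSpace ℝ (Fin n), ∏ i, |x i| ^ α i * Real.exp (-(x i) ^ 2)
      = ∏ i, Real.Gamma (((α i : ℝ) + 1) / 2) := by
    rw [← mp.integral_comp (MeasurableEquiv.measurableEmbedding _)]
    have : ∫ y : Fin n → ℝ, ∏ i, |y i| ^ α i * Real.exp (-(y i) ^ 2)
        = ∏ i, ∫ u : ℝ, |u| ^ α i * Real.exp (-u ^ 2) :=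
      integral_fintype_prod_eq_prod (ι := Fin n) (f := fun i u => |u| ^ α i * Real.exp (-u ^ 2))
    rw [show (∫ y : Fin n → ℝ,
        (fun x : EuclideanSpace ℝ (Fin n) => ∏ i, |x i| ^ α i * Real.exp (-(x i) ^ 2))
          ((MeasurableEquiv.toLp 2 (Fin n → ℝ)).symm.symm y))
      = ∫ y : Fin n → ℝ, ∏ i, |y i| ^ α i * Real.exp (-(y i) ^ 2) from rfl, this]
    exact Finset.prod_congr rfl fun i _ => integral_abs_pow_mul_exp_neg_sq (α i)
  have hlhs : ∫⁻ x : EuclideanSpace ℝ (Fin n),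
      ENNReal.ofReal (∏ i, |x i| ^ α i) * ENNReal.ofReal (Real.exp (-‖x‖ ^ 2))
      = ENNReal.ofReal (∏ i, Real.Gamma (((α i : ℝ) + 1) / 2)) := by
    simp_rw [hfun]
    rw [← MeasureTheory.ofReal_integral_eq_lintegral_ofReal hint
      (ae_of_all _ fun x => by positivity), hval]
  have := lintegral_monomial_mul_norm n hn α (fun r => ENNReal.ofReal (Real.exp (-r ^ 2))) hg
  rw [hlhs] at this
  rw [this]
  congr 1
  trans ∫⁻ r in Ioi (0:ℝ), ENNReal.ofReal (r ^ k * Real.exp (-r ^ 2))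
  · refine setLIntegral_congr_fun measurableSet_Ioi (fun r hr => ?_)
    rw [ENNReal.ofReal_mul (pow_nonneg (le_of_lt hr) k)]
  · rw [← MeasureTheory.ofReal_integral_eq_lintegral_ofReal
        (integrableOn_pow_mul_exp_neg_sq_Ioi k)
        (by filter_upwards [ae_restrict_mem measurableSet_Ioi] with r hr
            exact mul_nonneg (pow_nonneg (le_of_lt hr) k) (Real.exp_nonneg _)),
      integral_pow_mul_exp_neg_sq_Ioi k]

open scoped BigOperators

/-- Proposition 5.2 of the paper: for `Q(x) = ∏ᵢ |xᵢ|^{αᵢ}` and `βᵢ = (αᵢ+1)/2`,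
`∫_{Bₙ(0;r)} Q(x) dx = (2 r^{Σαᵢ+n}/(Σαᵢ+n)) · (∏ᵢ Γ(βᵢ))/Γ(Σᵢβᵢ)`. -/
theorem integral_abs_monomial_ball
    (n : ℕ) (hn : 1 ≤ n) (r : ℝ) (hr : 0 < r) (α : Fin n → ℕ) :
    (∫ x in Metric.closedBall (0 : EuclideanSpace ℝ (Fin n)) r, ∏ i, |x i| ^ α i)
      = (2 * r ^ ((∑ i, α i) + n) / (((∑ i, α i : ℕ) : ℝ) + n)) *
          ((∏ i, Real.Gamma (((α i : ℝ) + 1) / 2)) /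
            Real.Gamma (∑ i, ((α i : ℝ) + 1) / 2)) := by
  obtain ⟨m, rfl⟩ : ∃ m, n = m + 1 := ⟨n - 1, (Nat.succ_pred_eq_of_pos hn).symm⟩
  have hball := lintegral_monomial_ball (m+1) (Nat.le_add_left 1 m) α r hr
  have hgauss := lintegral_monomial_gaussian (m+1) (Nat.le_add_left 1 m) α
  simp only [Nat.add_sub_cancel] at hball hgauss
  set d := ∑ i, α i with hd
  set G := ∏ i, Real.Gamma (((α i : ℝ) + 1) / 2) with hG
  set s := (((m + d : ℕ) : ℝ) + 1) / 2 with hs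
  have hGpos : 0 < G := Finset.prod_pos fun i _ => Real.Gamma_pos_of_pos (by positivity)
  have hspos : 0 < s := by positivity
  have hΓs : 0 < Real.Gamma s := Real.Gamma_pos_of_pos hspos
  set c := ENNReal.ofReal ((1/2) * Real.Gamma s) with hc
  have hc0 : c ≠ 0 := by
    rw [hc]
    exact (ENNReal.ofReal_pos.mpr (by positivity)).ne'
  have hctop : c ≠ ⊤ := ENNReal.ofReal_ne_top
  have hSval : (∫⁻ y : Metric.sphere (0 : EuclideanSpace ℝ (Fin (m+1))) 1,
      ENNReal.ofReal (∏ i, |(y : EuclideanSpace ℝ (Fin (m+1))) i| ^ α i)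
        ∂(volume : MeasureTheory.Measure (EuclideanSpace ℝ (Fin (m+1)))).toSphere)
      = ENNReal.ofReal G * c⁻¹ := by
    rw [hgauss, mul_assoc, ENNReal.mul_inv_cancel hc0 hctop, mul_one]
  rw [hSval] at hball
  have hQc : Continuous fun x : EuclideanSpace ℝ (Fin (m+1)) => ∏ i, |x i| ^ α i := by fun_prop
  have hbo : (∫ x in Metric.closedBall (0 : EuclideanSpace ℝ (Fin (m+1))) r, ∏ i, |x i| ^ α i)
      = (∫⁻ x in Metric.closedBall (0 : EuclideanSpace ℝ (Fin (m+1))) r,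
          ENNReal.ofReal (∏ i, |x i| ^ α i)).toReal := by
    rw [MeasureTheory.integral_eq_lintegral_of_nonneg_ae
      (MeasureTheory.ae_of_all _ fun x => by positivity)
      hQc.aestronglyMeasurable]
  rw [hbo, hball]
  rw [ENNReal.toReal_mul, ENNReal.toReal_mul, ENNReal.toReal_inv,
    ENNReal.toReal_ofReal hGpos.le, hc, ENNReal.toReal_ofReal (by positivity),
    ENNReal.toReal_ofReal (by positivity)]
  have hsum : (∑ i, ((α i : ℝ) + 1) / 2) = s := by
    rw [hs, ← Finset.sum_div]
    congr 1
    push_cast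
    rw [Finset.sum_add_distrib]
    simp [Finset.card_univ]
    push_cast [hd]
    ring
  rw [hsum]
  rw [show d + (m + 1) = m + d + 1 by omega]
  push_cast
  field_simp
  ring
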